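/- The objective O(p) = I(U;V) − I(U;W), viewed as a function of the conditional distribution p(u|v) (with p(v) and p(w|u,v) fixed and p(w|u,v) allowed to depend on u), equals GD_E(p||p) and is a convex function of p(u|v). Consequently the optimization problem min_{p(u|v): supp(p)⊆E, E[ℓ(V,U,W)]≤L} I(U;V) − I(U;W) is a convex optimization problem. -/

import Mathlib

open Real

noncomputable section

variable {V U W : Type*} [Fintype V] [Fintype U] [Fintype W]
  [DecidableEq V] [DecidableEq U]

/-- `q(u|v)` is a conditional distribution supported on the edge set `E`. -/
def CondDistOn (E : Finset (V × U)) (q : V → U → ℝ) : Prop :=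
  (∀ v u, 0 ≤ q v u) ∧ (∀ v, ∑ u, q v u = 1) ∧ (∀ v u, q v u ≠ 0 → (v, u) ∈ E)

/-- Generalized K-L divergence `GD_E(q‖r)`. -/
def GDE (E : Finset (V × U)) (p : V → ℝ) (pw : V → U → W → ℝ)
    (q : V → U → ℝ) (r : W → U → ℝ) : ℝ :=
  ∑ v, ∑ u, ∑ w, if (v, u) ∈ E then p v * q v u * pw v u w * Real.log (q v u / r w u) else 0

/-- Expected loss `Loss(q) = Σ p(v) q(u|v) ℓ̃(v,u)`. -/
def LossE (E : Finset (V × U)) (p : V → ℝ) (lt : V → U → ℝ) (q : V → U → ℝ) : ℝ :=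
  ∑ v, ∑ u, if (v, u) ∈ E then p v * q v u * lt v u else 0

/-- The joint distribution `p(v,u,w) = p(v) q(u|v) p(w|u,v)`. -/
def jointD (E : Finset (V × U)) (p : V → ℝ) (pw : V → U → W → ℝ) (q : V → U → ℝ)
    (v : V) (u : U) (w : W) : ℝ :=
  if (v, u) ∈ E then p v * q v u * pw v u w else 0

/-- Marginal `p(u)`. -/
def margU (p : V → ℝ) (q : V → U → ℝ) (u : U) : ℝ := ∑ v, p v * q v u

/-- Marginal `p(u,w)`. -/
def margUW (E : Finset (V × U)) (p : V → ℝ) (pw : V → U → W → ℝ) (q : V → U → ℝ)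
    (u : U) (w : W) : ℝ := ∑ v, jointD E p pw q v u w

/-- Marginal `p(w)`. -/
def margW (E : Finset (V × U)) (p : V → ℝ) (pw : V → U → W → ℝ) (q : V → U → ℝ)
    (w : W) : ℝ := ∑ u, margUW E p pw q u w

/-- Mutual information `I(U;V)`. -/
def IUV (p : V → ℝ) (q : V → U → ℝ) : ℝ :=
  ∑ v, ∑ u, p v * q v u * Real.log (q v u / margU p q u)

/-- Mutual information `I(U;W)`. -/
def IUW (E : Finset (V × U)) (p : V → ℝ) (pw : V → U → W → ℝ) (q : V → U → ℝ) : ℝ :=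
  ∑ u, ∑ w, margUW E p pw q u w *
    Real.log (margUW E p pw q u w / (margU p q u * margW E p pw q w))

/-- Objective `I(U;V) - I(U;W)`. -/
def Obj (E : Finset (V × U)) (p : V → ℝ) (pw : V → U → W → ℝ) (q : V → U → ℝ) : ℝ :=
  IUV p q - IUW E p pw q

/-- The induced conditional distribution `r*(q)(u|w)`. -/
def rstar (E : Finset (V × U)) (p : V → ℝ) (pw : V → U → W → ℝ) (q : V → U → ℝ)
    (w : W) (u : U) : ℝ := margUW E p pw q u w / margW E p pw q w

/-- Gibbs update `q_s^*(r)(u|v)`. -/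
def qstar (E : Finset (V × U)) (pw : V → U → W → ℝ) (lt : V → U → ℝ)
    (s : ℝ) (r : W → U → ℝ) (v : V) (u : U) : ℝ :=
  (if (v, u) ∈ E then Real.exp (-s * lt v u) * ∏ w', r w' u ^ pw v u w' else 0) /
  (∑ u', if (v, u') ∈ E then Real.exp (-s * lt v u') * ∏ w', r w' u' ^ pw v u' w' else 0)

/-- The penalty (Lagrangian) function `F_s(q,r)`. -/
def FPen (E : Finset (V × U)) (p : V → ℝ) (pw : V → U → W → ℝ) (lt : V → U → ℝ)
    (s : ℝ) (q : V → U → ℝ) (r : W → U → ℝ) : ℝ :=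
  GDE E p pw q r + s * LossE E p lt q

/-- Generalized K-L divergence between two conditional distributions on `E`. -/
def GDcond (E : Finset (V × U)) (p : V → ℝ) (q1 q2 : V → U → ℝ) : ℝ :=
  ∑ v, ∑ u, if (v, u) ∈ E then p v * q1 v u * Real.log (q1 v u / q2 v u) else 0

/-- Conditional K-L divergence `GD_q(r1‖r2)` weighted by `q(w)`. -/
def GDr (E : Finset (V × U)) (p : V → ℝ) (pw : V → U → W → ℝ) (q : V → U → ℝ)
    (r1 r2 : W → U → ℝ) : ℝ :=
  ∑ u, ∑ w, margW E p pw q w * r1 w u * Real.log (r1 w u / r2 w u)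

/-- The target-loss function `T(L)` (valued in `EReal`, `+∞` if infeasible). -/
def TL (E : Finset (V × U)) (p : V → ℝ) (pw : V → U → W → ℝ) (lt : V → U → ℝ)
    (L : ℝ) : EReal :=
  sInf {x : EReal | ∃ q, CondDistOn E q ∧ LossE E p lt q ≤ L ∧ x = (Obj E p pw q : EReal)}


/-- `log t ≥ 1 - 1/t` for `t > 0`. -/
lemma one_sub_inv_le_log {t : ℝ} (ht : 0 < t) : 1 - 1/t ≤ Real.log t := by
  have h := Real.log_le_sub_one_of_pos (x := 1/t) (by positivity)
  rw [Real.log_div one_ne_zero (ne_of_gt ht), Real.log_one] at h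
  linarith

lemma jointD_nonneg (E : Finset (V × U)) (p : V → ℝ) (pw : V → U → W → ℝ) (q : V → U → ℝ)
    (hp : ∀ v, 0 ≤ p v) (hq0 : ∀ v u, 0 ≤ q v u) (hpw0 : ∀ v u w, 0 ≤ pw v u w)
    (v : V) (u : U) (w : W) : 0 ≤ jointD E p pw q v u w := by
  unfold jointD; split
  · exact mul_nonneg (mul_nonneg (hp v) (hq0 v u)) (hpw0 v u w)
  · exact le_refl 0

lemma margUW_nonneg (E : Finset (V × U)) (p : V → ℝ) (pw : V → U → W → ℝ) (q : V → U → ℝ)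
    (hp : ∀ v, 0 ≤ p v) (hq0 : ∀ v u, 0 ≤ q v u) (hpw0 : ∀ v u w, 0 ≤ pw v u w)
    (u : U) (w : W) : 0 ≤ margUW E p pw q u w :=
  Finset.sum_nonneg fun v _ => jointD_nonneg E p pw q hp hq0 hpw0 v u w

lemma margW_nonneg (E : Finset (V × U)) (p : V → ℝ) (pw : V → U → W → ℝ) (q : V → U → ℝ)
    (hp : ∀ v, 0 ≤ p v) (hq0 : ∀ v u, 0 ≤ q v u) (hpw0 : ∀ v u w, 0 ≤ pw v u w)
    (w : W) : 0 ≤ margW E p pw q w :=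
  Finset.sum_nonneg fun u _ => margUW_nonneg E p pw q hp hq0 hpw0 u w

lemma margUW_pos (E : Finset (V × U)) (p : V → ℝ) (pw : V → U → W → ℝ) (q : V → U → ℝ)
    (hp : ∀ v, 0 ≤ p v) (hq0 : ∀ v u, 0 ≤ q v u) (hpw0 : ∀ v u w, 0 ≤ pw v u w)
    {v : V} {u : U} {w : W} (hmem : (v, u) ∈ E)
    (hpos : 0 < p v * q v u * pw v u w) : 0 < margUW E p pw q u w := by
  have hle : jointD E p pw q v u w ≤ margUW E p pw q u w :=
    Finset.single_le_sum (fun i _ => jointD_nonneg E p pw q hp hq0 hpw0 i u w)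
      (Finset.mem_univ v)
  have : jointD E p pw q v u w = p v * q v u * pw v u w := by unfold jointD; rw [if_pos hmem]
  linarith [this ▸ hle]

lemma margUW_le_margW (E : Finset (V × U)) (p : V → ℝ) (pw : V → U → W → ℝ) (q : V → U → ℝ)
    (hp : ∀ v, 0 ≤ p v) (hq0 : ∀ v u, 0 ≤ q v u) (hpw0 : ∀ v u w, 0 ≤ pw v u w)
    (u : U) (w : W) : margUW E p pw q u w ≤ margW E p pw q w :=
  Finset.single_le_sum (fun i _ => margUW_nonneg E p pw q hp hq0 hpw0 i w) (Finset.mem_univ u)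

lemma sum_rstar_le_one (E : Finset (V × U)) (p : V → ℝ) (pw : V → U → W → ℝ) (q : V → U → ℝ)
    (hp : ∀ v, 0 ≤ p v) (hq0 : ∀ v u, 0 ≤ q v u) (hpw0 : ∀ v u w, 0 ≤ pw v u w)
    (w : W) : ∑ u, rstar E p pw q w u ≤ 1 := by
  rcases eq_or_lt_of_le (margW_nonneg E p pw q hp hq0 hpw0 w) with h0 | h0
  · have : ∀ u, rstar E p pw q w u = margUW E p pw q u w / margW E p pw q w := fun u => rfl
    rw [Finset.sum_congr rfl fun u _ => this u]
    rw [← h0]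
    simp
  · have : ∑ u, rstar E p pw q w u = (∑ u, margUW E p pw q u w) / margW E p pw q w := by
      unfold rstar; rw [Finset.sum_div]
    rw [this]
    have : (∑ u, margUW E p pw q u w) = margW E p pw q w := rfl
    rw [this, div_self (ne_of_gt h0)]

lemma obj_eq_gde_rstar (E : Finset (V × U)) (p : V → ℝ) (hp : ∀ v, 0 < p v)
    (pw : V → U → W → ℝ) (hpw0 : ∀ v u w, 0 ≤ pw v u w)
    (hpw1 : ∀ v u, (v, u) ∈ E → ∑ w, pw v u w = 1)
    (q : V → U → ℝ) (hq : CondDistOn E q) :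
    Obj E p pw q = GDE E p pw q (rstar E p pw q) := by
  obtain ⟨hq0, hq1, hqE⟩ := hq
  have hp0 : ∀ v, 0 ≤ p v := fun v => (hp v).le
  have hIUV : IUV p q = ∑ v, ∑ u, ∑ w,
      (if (v,u) ∈ E then p v * q v u * pw v u w * Real.log (q v u / margU p q u) else 0) := by
    unfold IUV
    refine Finset.sum_congr rfl fun v _ => Finset.sum_congr rfl fun u _ => ?_
    by_cases hz : q v u = 0
    · simp [hz]
    · have hmem := hqE v u hz
      simp only [if_pos hmem]
      have : ∑ w, p v * q v u * pw v u w * Real.log (q v u / margU p q u)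
          = (p v * q v u * Real.log (q v u / margU p q u)) * ∑ w, pw v u w := by
        rw [Finset.mul_sum]
        exact Finset.sum_congr rfl fun w _ => by ring
      rw [this, hpw1 v u hmem, mul_one]
  have hIUW : IUW E p pw q = ∑ v, ∑ u, ∑ w,
      (if (v,u) ∈ E then p v * q v u * pw v u w *
        Real.log (margUW E p pw q u w / (margU p q u * margW E p pw q w)) else 0) := by
    unfold IUW
    have step : ∀ u w, margUW E p pw q u w *
        Real.log (margUW E p pw q u w / (margU p q u * margW E p pw q w))
        = ∑ v, (if (v,u) ∈ E then p v * q v u * pw v u w *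
            Real.log (margUW E p pw q u w / (margU p q u * margW E p pw q w)) else 0) := by
      intro u w
      rw [margUW, Finset.sum_mul]
      refine Finset.sum_congr rfl fun v _ => ?_
      unfold jointD
      rw [ite_mul, zero_mul]
    rw [Finset.sum_congr rfl fun u _ => Finset.sum_congr rfl fun w _ => step u w]
    rw [Finset.sum_congr rfl fun u (_ : u ∈ Finset.univ) => Finset.sum_comm]
    exact Finset.sum_comm
  unfold Obj
  rw [hIUV, hIUW, ← Finset.sum_sub_distrib]
  unfold GDE
  refine Finset.sum_congr rfl fun v _ => ?_
  rw [← Finset.sum_sub_distrib]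
  refine Finset.sum_congr rfl fun u _ => ?_
  rw [← Finset.sum_sub_distrib]
  refine Finset.sum_congr rfl fun w _ => ?_
  by_cases hmem : (v, u) ∈ E
  · simp only [if_pos hmem]
    by_cases hz : q v u = 0
    · simp [hz]
    · by_cases hzw : pw v u w = 0
      · simp [hzw]
      · have hqp : 0 < q v u := lt_of_le_of_ne (hq0 v u) (Ne.symm hz)
        have hpwp : 0 < pw v u w := lt_of_le_of_ne (hpw0 v u w) (Ne.symm hzw)
        have hU : 0 < margU p q u := by
          have hle : p v * q v u ≤ margU p q u :=
            Finset.single_le_sum (f := fun i => p i * q i u)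
              (fun i _ => mul_nonneg (hp0 i) (hq0 i u)) (Finset.mem_univ v)
          nlinarith [hp v]
        have hUW : 0 < margUW E p pw q u w :=
          margUW_pos E p pw q hp0 hq0 hpw0 hmem (mul_pos (mul_pos (hp v) hqp) hpwp)
        have hW : 0 < margW E p pw q w :=
          lt_of_lt_of_le hUW (margUW_le_margW E p pw q hp0 hq0 hpw0 u w)
        have hrs : rstar E p pw q w u = margUW E p pw q u w / margW E p pw q w := rfl
        rw [hrs]
        have l1 : Real.log (q v u / margU p q u) = Real.log (q v u) - Real.log (margU p q u) :=
          Real.log_div hz (ne_of_gt hU)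
        have l2 : Real.log (margUW E p pw q u w / (margU p q u * margW E p pw q w))
            = Real.log (margUW E p pw q u w) - (Real.log (margU p q u) + Real.log (margW E p pw q w)) := by
          rw [Real.log_div (ne_of_gt hUW) (by positivity), Real.log_mul (ne_of_gt hU) (ne_of_gt hW)]
        have l3 : Real.log (q v u / (margUW E p pw q u w / margW E p pw q w))
            = Real.log (q v u) - (Real.log (margUW E p pw q u w) - Real.log (margW E p pw q w)) := by
          rw [Real.log_div hz (ne_of_gt (div_pos hUW hW)), Real.log_div (ne_of_gt hUW) (ne_of_gt hW)]
        rw [l1, l2, l3]; ring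
  · simp only [if_neg hmem, sub_zero]

/-- Two-point log-sum inequality with support condition. -/
lemma two_point_logsum {a b x1 x2 y1 y2 : ℝ} (ha : 0 < a) (hb : 0 < b)
    (hx1 : 0 ≤ x1) (hx2 : 0 ≤ x2) (hy1 : 0 ≤ y1) (hy2 : 0 ≤ y2)
    (h1 : 0 < x1 → 0 < y1) (h2 : 0 < x2 → 0 < y2) :
    (a*x1+b*x2) * Real.log ((a*x1+b*x2)/(a*y1+b*y2)) ≤
      a*(x1*Real.log (x1/y1)) + b*(x2*Real.log (x2/y2)) := by
  rcases eq_or_lt_of_le hx1 with hx1' | hx1'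
  · rcases eq_or_lt_of_le hx2 with hx2' | hx2'
    · simp [← hx1', ← hx2']
    · -- x1 = 0, x2 > 0
      have hy2' := h2 hx2'
      have hY : 0 < a*y1 + b*y2 := by nlinarith
      have key : (b*x2)/(a*y1+b*y2) ≤ (b*x2)/(b*y2) := by
        apply div_le_div_of_nonneg_left (by positivity) (by positivity)
        nlinarith
      have : Real.log ((b*x2)/(a*y1+b*y2)) ≤ Real.log (x2/y2) := by
        have h2' : (b*x2)/(b*y2) = x2/y2 := by field_simp
        rw [← h2']
        exact Real.log_le_log (by positivity) key
      rw [← hx1']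
      have e : a*0 + b*x2 = b*x2 := by ring
      rw [e]
      have := mul_le_mul_of_nonneg_left this (show (0:ℝ) ≤ b*x2 by positivity)
      simp only [zero_mul, mul_zero, add_zero, zero_add]
      linarith [this]
  · rcases eq_or_lt_of_le hx2 with hx2' | hx2'
    · -- x2 = 0, x1 > 0
      have hy1' := h1 hx1'
      have hY : 0 < a*y1 + b*y2 := by nlinarith
      have key : (a*x1)/(a*y1+b*y2) ≤ (a*x1)/(a*y1) := by
        apply div_le_div_of_nonneg_left (by positivity) (by positivity)
        nlinarith
      have hlog : Real.log ((a*x1)/(a*y1+b*y2)) ≤ Real.log (x1/y1) := by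
        have h1' : (a*x1)/(a*y1) = x1/y1 := by field_simp
        rw [← h1']
        exact Real.log_le_log (by positivity) key
      rw [← hx2']
      have e : a*x1 + b*0 = a*x1 := by ring
      rw [e]
      have := mul_le_mul_of_nonneg_left hlog (show (0:ℝ) ≤ a*x1 by positivity)
      simp only [zero_mul, mul_zero, add_zero, zero_add]
      linarith [this]
    · -- both positive
      have hy1' := h1 hx1'
      have hy2' := h2 hx2'
      set X := a*x1 + b*x2 with hX
      set Y := a*y1 + b*y2 with hY
      have hXp : 0 < X := by positivity
      have hYp : 0 < Y := by positivity
      have t1 : 1 - (y1*X)/(x1*Y) ≤ Real.log ((x1*Y)/(y1*X)) := by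
        have := one_sub_inv_le_log (t := (x1*Y)/(y1*X)) (by positivity)
        have e : 1/((x1*Y)/(y1*X)) = (y1*X)/(x1*Y) := by
          rw [one_div_div]
        rw [e] at this; exact this
      have t2 : 1 - (y2*X)/(x2*Y) ≤ Real.log ((x2*Y)/(y2*X)) := by
        have := one_sub_inv_le_log (t := (x2*Y)/(y2*X)) (by positivity)
        have e : 1/((x2*Y)/(y2*X)) = (y2*X)/(x2*Y) := by
          rw [one_div_div]
        rw [e] at this; exact this
      have l1 : Real.log ((x1*Y)/(y1*X)) = Real.log (x1/y1) - Real.log (X/Y) := by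
        rw [Real.log_div (by positivity) (by positivity),
            Real.log_div (ne_of_gt hx1') (ne_of_gt hy1'),
            Real.log_div (ne_of_gt hXp) (ne_of_gt hYp),
            Real.log_mul (ne_of_gt hx1') (ne_of_gt hYp),
            Real.log_mul (ne_of_gt hy1') (ne_of_gt hXp)]
        ring
      have l2 : Real.log ((x2*Y)/(y2*X)) = Real.log (x2/y2) - Real.log (X/Y) := by
        rw [Real.log_div (by positivity) (by positivity),
            Real.log_div (ne_of_gt hx2') (ne_of_gt hy2'),
            Real.log_div (ne_of_gt hXp) (ne_of_gt hYp),
            Real.log_mul (ne_of_gt hx2') (ne_of_gt hYp),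
            Real.log_mul (ne_of_gt hy2') (ne_of_gt hXp)]
        ring
      rw [l1] at t1; rw [l2] at t2
      -- multiply t1 by a*x1, t2 by b*x2, sum
      have m1 : a*x1*(1 - (y1*X)/(x1*Y)) ≤ a*x1*(Real.log (x1/y1) - Real.log (X/Y)) :=
        mul_le_mul_of_nonneg_left t1 (by positivity)
      have m2 : b*x2*(1 - (y2*X)/(x2*Y)) ≤ b*x2*(Real.log (x2/y2) - Real.log (X/Y)) :=
        mul_le_mul_of_nonneg_left t2 (by positivity)
      have e1 : a*x1*(1 - (y1*X)/(x1*Y)) = a*x1 - a*y1*(X/Y) := by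
        field_simp
      have e2 : b*x2*(1 - (y2*X)/(x2*Y)) = b*x2 - b*y2*(X/Y) := by
        field_simp
      have esum : (a*x1 - a*y1*(X/Y)) + (b*x2 - b*y2*(X/Y)) = X - Y*(X/Y) := by ring
      have hYX : Y*(X/Y) = X := by field_simp
      nlinarith [m1, m2]

lemma margUW_combo (E : Finset (V × U)) (p : V → ℝ) (pw : V → U → W → ℝ)
    (q1 q2 : V → U → ℝ) (a b : ℝ) (u : U) (w : W) :
    margUW E p pw (a • q1 + b • q2) u w = a * margUW E p pw q1 u w + b * margUW E p pw q2 u w := by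
  unfold margUW
  rw [Finset.mul_sum, Finset.mul_sum, ← Finset.sum_add_distrib]
  refine Finset.sum_congr rfl fun v _ => ?_
  unfold jointD
  simp only [Pi.add_apply, Pi.smul_apply, smul_eq_mul]
  by_cases h : (v, u) ∈ E
  · simp only [if_pos h]; ring
  · simp [if_neg h]

/-- Gibbs: `rstar` minimizes `GDE q ·` among admissible `r`. -/
lemma gde_rstar_le_gde (E : Finset (V × U)) (p : V → ℝ) (hp : ∀ v, 0 < p v)
    (pw : V → U → W → ℝ) (hpw0 : ∀ v u w, 0 ≤ pw v u w)
    (q : V → U → ℝ) (hq : CondDistOn E q) (r : W → U → ℝ)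
    (hr0 : ∀ w u, 0 ≤ r w u) (hr1 : ∀ w, ∑ u, r w u ≤ 1)
    (hrpos : ∀ u w, 0 < margUW E p pw q u w → 0 < r w u) :
    GDE E p pw q (rstar E p pw q) ≤ GDE E p pw q r := by
  obtain ⟨hq0, hq1, hqE⟩ := hq
  have hp0 : ∀ v, 0 ≤ p v := fun v => (hp v).le
  rw [← sub_nonneg]
  have expand : GDE E p pw q r - GDE E p pw q (rstar E p pw q)
      = ∑ v, ∑ u, ∑ w,
        ((if (v,u) ∈ E then p v * q v u * pw v u w * Real.log (q v u / r w u) else 0)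
         - (if (v,u) ∈ E then p v * q v u * pw v u w * Real.log (q v u / rstar E p pw q w u) else 0)) := by
    unfold GDE
    rw [← Finset.sum_sub_distrib]
    refine Finset.sum_congr rfl fun v _ => ?_
    rw [← Finset.sum_sub_distrib]
    refine Finset.sum_congr rfl fun u _ => ?_
    rw [← Finset.sum_sub_distrib]
  have claim1 : ∀ v u w,
      (if (v,u) ∈ E then p v * q v u * pw v u w * (1 - r w u / rstar E p pw q w u) else 0)
      ≤ (if (v,u) ∈ E then p v * q v u * pw v u w * Real.log (q v u / r w u) else 0)
         - (if (v,u) ∈ E then p v * q v u * pw v u w * Real.log (q v u / rstar E p pw q w u) else 0) := by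
    intro v u w
    by_cases hmem : (v, u) ∈ E
    · simp only [if_pos hmem]
      by_cases hz : q v u = 0
      · simp [hz]
      · by_cases hzw : pw v u w = 0
        · simp [hzw]
        · have hqp : 0 < q v u := lt_of_le_of_ne (hq0 v u) (Ne.symm hz)
          have hpwp : 0 < pw v u w := lt_of_le_of_ne (hpw0 v u w) (Ne.symm hzw)
          have hUW : 0 < margUW E p pw q u w :=
            margUW_pos E p pw q hp0 hq0 hpw0 hmem (mul_pos (mul_pos (hp v) hqp) hpwp)
          have hW : 0 < margW E p pw q w :=
            lt_of_lt_of_le hUW (margUW_le_margW E p pw q hp0 hq0 hpw0 u w)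
          have hrsp : 0 < rstar E p pw q w u := div_pos hUW hW
          have hrp : 0 < r w u := hrpos u w hUW
          have hlog : 1 - r w u / rstar E p pw q w u
              ≤ Real.log (q v u / r w u) - Real.log (q v u / rstar E p pw q w u) := by
            have h1 := one_sub_inv_le_log (t := rstar E p pw q w u / r w u) (div_pos hrsp hrp)
            rw [one_div_div] at h1
            rw [Real.log_div hz (ne_of_gt hrp), Real.log_div hz (ne_of_gt hrsp)]
            rw [Real.log_div (ne_of_gt hrsp) (ne_of_gt hrp)] at h1
            linarith
          have hc : (0:ℝ) ≤ p v * q v u * pw v u w :=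
            mul_nonneg (mul_nonneg (hp0 v) (hq0 v u)) (hpw0 v u w)
          have := mul_le_mul_of_nonneg_left hlog hc
          linarith [this]
    · simp [hmem]
  have claim2 : ∑ v, ∑ u, ∑ w,
      (if (v,u) ∈ E then p v * q v u * pw v u w * (1 - r w u / rstar E p pw q w u) else 0)
      = ∑ u, ∑ w, margUW E p pw q u w * (1 - r w u / rstar E p pw q w u) := by
    rw [Finset.sum_comm]
    refine Finset.sum_congr rfl fun u _ => ?_
    rw [Finset.sum_comm]
    refine Finset.sum_congr rfl fun w _ => ?_
    rw [margUW, Finset.sum_mul]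
    refine Finset.sum_congr rfl fun v _ => ?_
    unfold jointD
    rw [ite_mul, zero_mul]
  have claim3 : 0 ≤ ∑ u, ∑ w, margUW E p pw q u w * (1 - r w u / rstar E p pw q w u) := by
    have perterm : ∀ u w, margUW E p pw q u w - r w u * margW E p pw q w
        ≤ margUW E p pw q u w * (1 - r w u / rstar E p pw q w u) := by
      intro u w
      rcases eq_or_lt_of_le (margUW_nonneg E p pw q hp0 hq0 hpw0 u w) with h0 | h0
      · rw [← h0, zero_mul, zero_sub]
        have : 0 ≤ r w u * margW E p pw q w :=
          mul_nonneg (hr0 w u) (margW_nonneg E p pw q hp0 hq0 hpw0 w)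
        linarith
      · have hW : 0 < margW E p pw q w :=
          lt_of_lt_of_le h0 (margUW_le_margW E p pw q hp0 hq0 hpw0 u w)
        have hrs : rstar E p pw q w u = margUW E p pw q u w / margW E p pw q w := rfl
        rw [hrs]
        apply le_of_eq
        field_simp
    have e1 : ∑ u, ∑ w, (margUW E p pw q u w - r w u * margW E p pw q w)
        = ∑ w, margW E p pw q w * (1 - ∑ u, r w u) := by
      rw [Finset.sum_comm]
      refine Finset.sum_congr rfl fun w _ => ?_
      rw [Finset.sum_sub_distrib]
      have h1 : ∑ u, margUW E p pw q u w = margW E p pw q w := rfl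
      rw [h1, ← Finset.sum_mul]
      ring
    have e2 : 0 ≤ ∑ w, margW E p pw q w * (1 - ∑ u, r w u) :=
      Finset.sum_nonneg fun w _ => mul_nonneg (margW_nonneg E p pw q hp0 hq0 hpw0 w)
        (by linarith [hr1 w])
    have e3 := Finset.sum_le_sum (s := Finset.univ)
      (fun u (_ : u ∈ Finset.univ) => Finset.sum_le_sum
        (fun w (_ : w ∈ Finset.univ) => perterm u w))
    rw [e1] at e3
    linarith
  rw [expand]
  calc (0:ℝ) ≤ ∑ u, ∑ w, margUW E p pw q u w * (1 - r w u / rstar E p pw q w u) := claim3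
    _ = ∑ v, ∑ u, ∑ w,
        (if (v,u) ∈ E then p v * q v u * pw v u w * (1 - r w u / rstar E p pw q w u) else 0) :=
      claim2.symm
    _ ≤ _ := Finset.sum_le_sum fun v _ => Finset.sum_le_sum fun u _ =>
        Finset.sum_le_sum fun w _ => claim1 v u w

lemma rstar_nonneg (E : Finset (V × U)) (p : V → ℝ) (pw : V → U → W → ℝ) (q : V → U → ℝ)
    (hp : ∀ v, 0 ≤ p v) (hq0 : ∀ v u, 0 ≤ q v u) (hpw0 : ∀ v u w, 0 ≤ pw v u w)
    (w : W) (u : U) : 0 ≤ rstar E p pw q w u :=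
  div_nonneg (margUW_nonneg E p pw q hp hq0 hpw0 u w) (margW_nonneg E p pw q hp hq0 hpw0 w)

/-- If `rstar q w u = 0` then `margUW q u w = 0`. -/
lemma margUW_eq_zero_of_rstar (E : Finset (V × U)) (p : V → ℝ) (pw : V → U → W → ℝ)
    (q : V → U → ℝ) (hp : ∀ v, 0 ≤ p v) (hq0 : ∀ v u, 0 ≤ q v u)
    (hpw0 : ∀ v u w, 0 ≤ pw v u w) {w : W} {u : U}
    (h : rstar E p pw q w u = 0) : margUW E p pw q u w = 0 := by
  rcases eq_or_lt_of_le (margW_nonneg E p pw q hp hq0 hpw0 w) with h0 | h0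
  · have h1 := margUW_le_margW E p pw q hp hq0 hpw0 u w
    have h2 := margUW_nonneg E p pw q hp hq0 hpw0 u w
    rw [← h0] at h1
    linarith
  · have : rstar E p pw q w u = margUW E p pw q u w / margW E p pw q w := rfl
    rw [this] at h
    exact (div_eq_zero_iff.mp h).resolve_right (ne_of_gt h0)

/-- Joint convexity step: GDE at the convex combination of `(qᵢ, rstar qᵢ)`. -/
lemma gde_combo (E : Finset (V × U)) (p : V → ℝ) (hp : ∀ v, 0 < p v)
    (pw : V → U → W → ℝ) (hpw0 : ∀ v u w, 0 ≤ pw v u w)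
    (q1 q2 : V → U → ℝ) (hq1 : CondDistOn E q1) (hq2 : CondDistOn E q2)
    (a b : ℝ) (ha : 0 < a) (hb : 0 < b) :
    GDE E p pw (fun v u => a * q1 v u + b * q2 v u)
        (fun w u => a * rstar E p pw q1 w u + b * rstar E p pw q2 w u)
      ≤ a * GDE E p pw q1 (rstar E p pw q1) + b * GDE E p pw q2 (rstar E p pw q2) := by
  have hp0 : ∀ v, 0 ≤ p v := fun v => (hp v).le
  unfold GDE
  rw [Finset.mul_sum, Finset.mul_sum, ← Finset.sum_add_distrib]
  refine Finset.sum_le_sum fun v _ => ?_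
  rw [Finset.mul_sum, Finset.mul_sum, ← Finset.sum_add_distrib]
  refine Finset.sum_le_sum fun u _ => ?_
  rw [Finset.mul_sum, Finset.mul_sum, ← Finset.sum_add_distrib]
  refine Finset.sum_le_sum fun w _ => ?_
  by_cases hmem : (v, u) ∈ E
  · simp only [if_pos hmem]
    by_cases hzw : pw v u w = 0
    · simp [hzw]
    · have hpwp : 0 < pw v u w := lt_of_le_of_ne (hpw0 v u w) (Ne.symm hzw)
      have h1 : 0 < q1 v u → 0 < rstar E p pw q1 w u := by
        intro hx
        have hUW : 0 < margUW E p pw q1 u w :=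
          margUW_pos E p pw q1 hp0 hq1.1 hpw0 hmem (mul_pos (mul_pos (hp v) hx) hpwp)
        exact div_pos hUW (lt_of_lt_of_le hUW (margUW_le_margW E p pw q1 hp0 hq1.1 hpw0 u w))
      have h2 : 0 < q2 v u → 0 < rstar E p pw q2 w u := by
        intro hx
        have hUW : 0 < margUW E p pw q2 u w :=
          margUW_pos E p pw q2 hp0 hq2.1 hpw0 hmem (mul_pos (mul_pos (hp v) hx) hpwp)
        exact div_pos hUW (lt_of_lt_of_le hUW (margUW_le_margW E p pw q2 hp0 hq2.1 hpw0 u w))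
      have key := two_point_logsum ha hb (hq1.1 v u) (hq2.1 v u)
        (rstar_nonneg E p pw q1 hp0 hq1.1 hpw0 w u)
        (rstar_nonneg E p pw q2 hp0 hq2.1 hpw0 w u) h1 h2
      have hc : (0:ℝ) ≤ p v * pw v u w := mul_nonneg (hp0 v) (hpw0 v u w)
      have hkey := mul_le_mul_of_nonneg_left key hc
      nlinarith [hkey]
  · simp [hmem]

lemma condDistOn_combo {E : Finset (V × U)} {q1 q2 : V → U → ℝ}
    (h1 : CondDistOn E q1) (h2 : CondDistOn E q2)
    {a b : ℝ} (ha : 0 ≤ a) (hb : 0 ≤ b) (hab : a + b = 1) :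
    CondDistOn E (a • q1 + b • q2) := by
  refine ⟨?_, ?_, ?_⟩
  · intro v u
    simp only [Pi.add_apply, Pi.smul_apply, smul_eq_mul]
    exact add_nonneg (mul_nonneg ha (h1.1 v u)) (mul_nonneg hb (h2.1 v u))
  · intro v
    simp only [Pi.add_apply, Pi.smul_apply, smul_eq_mul]
    rw [Finset.sum_add_distrib, ← Finset.mul_sum, ← Finset.mul_sum, h1.2.1 v, h2.2.1 v]
    linarith
  · intro v u hne
    simp only [Pi.add_apply, Pi.smul_apply, smul_eq_mul] at hne
    by_cases hz1 : q1 v u = 0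
    · refine h2.2.2 v u fun hz2 => hne ?_
      rw [hz1, hz2]; ring
    · exact h1.2.2 v u hz1

lemma lossE_combo (E : Finset (V × U)) (p : V → ℝ) (lt : V → U → ℝ)
    (q1 q2 : V → U → ℝ) (a b : ℝ) :
    LossE E p lt (a • q1 + b • q2) = a * LossE E p lt q1 + b * LossE E p lt q2 := by
  unfold LossE
  rw [Finset.mul_sum, Finset.mul_sum, ← Finset.sum_add_distrib]
  refine Finset.sum_congr rfl fun v _ => ?_
  rw [Finset.mul_sum, Finset.mul_sum, ← Finset.sum_add_distrib]
  refine Finset.sum_congr rfl fun u _ => ?_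
  simp only [Pi.add_apply, Pi.smul_apply, smul_eq_mul]
  by_cases h : (v, u) ∈ E
  · simp only [if_pos h]; ring
  · simp [if_neg h]
/-- the objective `O(p) = I(U;V) − I(U;W)` equals `GD_E(p‖p)`
(second argument the induced conditional of `U` given `W`), is convex in `p(u|v)`,
and the feasible set is convex, so the problem is a convex optimization problem. -/
theorem objective_convex
    (E : Finset (V × U)) (hE : ∀ v : V, ∃ u, (v, u) ∈ E)
    (p : V → ℝ) (hp : ∀ v, 0 < p v) (hp1 : ∑ v, p v = 1)
    (pw : V → U → W → ℝ) (hpw0 : ∀ v u w, 0 ≤ pw v u w)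
    (hpw1 : ∀ v u, (v, u) ∈ E → ∑ w, pw v u w = 1)
    (lt : V → U → ℝ) (hlt : ∀ v u, 0 ≤ lt v u) (L : ℝ) :
    (∀ q : V → U → ℝ, CondDistOn E q →
        Obj E p pw q = GDE E p pw q (rstar E p pw q))
      ∧ ConvexOn ℝ {q : V → U → ℝ | CondDistOn E q} (fun q => Obj E p pw q)
      ∧ Convex ℝ {q : V → U → ℝ | CondDistOn E q ∧ LossE E p lt q ≤ L} := by

  have hsetconv : Convex ℝ {q : V → U → ℝ | CondDistOn E q} := by
    intro q1 hq1 q2 hq2 a b ha hb hab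
    exact condDistOn_combo hq1 hq2 ha hb hab
  have hp0 : ∀ v, 0 ≤ p v := fun v => (hp v).le
  refine ⟨fun q hq => obj_eq_gde_rstar E p hp pw hpw0 hpw1 q hq, ⟨hsetconv, ?_⟩, ?_⟩
  · intro q1 hq1 q2 hq2 a b ha hb hab
    simp only [smul_eq_mul]
    rcases eq_or_lt_of_le ha with ha0 | ha0
    · have hb1 : b = 1 := by linarith
      have he : a • q1 + b • q2 = q2 := by
        funext v u
        simp [← ha0, hb1]
      rw [he, ← ha0, hb1]
      simp
    rcases eq_or_lt_of_le hb with hb0 | hb0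
    · have ha1 : a = 1 := by linarith
      have he : a • q1 + b • q2 = q1 := by
        funext v u
        simp [← hb0, ha1]
      rw [he, ← hb0, ha1]
      simp
    -- main case: 0 < a, 0 < b
    have hqc : CondDistOn E (a • q1 + b • q2) := condDistOn_combo hq1 hq2 ha hb hab
    set r1 := rstar E p pw q1 with hr1def
    set r2 := rstar E p pw q2 with hr2def
    have hre : (a • q1 + b • q2) = (fun v u => a * q1 v u + b * q2 v u) := by
      funext v u
      simp [smul_eq_mul]
    -- Gibbs step
    have hrbar0 : ∀ w u, 0 ≤ a * r1 w u + b * r2 w u := fun w u =>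
      add_nonneg (mul_nonneg ha (rstar_nonneg E p pw q1 hp0 hq1.1 hpw0 w u))
        (mul_nonneg hb (rstar_nonneg E p pw q2 hp0 hq2.1 hpw0 w u))
    have hrbar1 : ∀ w, ∑ u, (a * r1 w u + b * r2 w u) ≤ 1 := by
      intro w
      rw [Finset.sum_add_distrib, ← Finset.mul_sum, ← Finset.mul_sum]
      have s1 := sum_rstar_le_one E p pw q1 hp0 hq1.1 hpw0 w
      have s2 := sum_rstar_le_one E p pw q2 hp0 hq2.1 hpw0 w
      nlinarith [mul_le_mul_of_nonneg_left s1 ha, mul_le_mul_of_nonneg_left s2 hb]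
    have hrbarpos : ∀ u w, 0 < margUW E p pw (a • q1 + b • q2) u w →
        0 < a * r1 w u + b * r2 w u := by
      intro u w hpos
      by_contra hle
      push_neg at hle
      have h0 : a * r1 w u + b * r2 w u = 0 := le_antisymm hle (hrbar0 w u)
      have hz1 : r1 w u = 0 := by
        nlinarith [mul_nonneg ha (rstar_nonneg E p pw q1 hp0 hq1.1 hpw0 w u),
          mul_nonneg hb (rstar_nonneg E p pw q2 hp0 hq2.1 hpw0 w u),
          rstar_nonneg E p pw q1 hp0 hq1.1 hpw0 w u]
      have hz2 : r2 w u = 0 := by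
        nlinarith [mul_nonneg ha (rstar_nonneg E p pw q1 hp0 hq1.1 hpw0 w u),
          mul_nonneg hb (rstar_nonneg E p pw q2 hp0 hq2.1 hpw0 w u),
          rstar_nonneg E p pw q2 hp0 hq2.1 hpw0 w u]
      have m1 : margUW E p pw q1 u w = 0 :=
        margUW_eq_zero_of_rstar E p pw q1 hp0 hq1.1 hpw0 hz1
      have m2 : margUW E p pw q2 u w = 0 :=
        margUW_eq_zero_of_rstar E p pw q2 hp0 hq2.1 hpw0 hz2
      rw [margUW_combo E p pw q1 q2 a b u w, m1, m2] at hpos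
      simp at hpos
    have hGibbs : GDE E p pw (a • q1 + b • q2) (rstar E p pw (a • q1 + b • q2))
        ≤ GDE E p pw (a • q1 + b • q2) (fun w u => a * r1 w u + b * r2 w u) :=
      gde_rstar_le_gde E p hp pw hpw0 (a • q1 + b • q2) hqc _
        hrbar0 hrbar1 hrbarpos
    have hJC : GDE E p pw (a • q1 + b • q2) (fun w u => a * r1 w u + b * r2 w u)
        ≤ a * GDE E p pw q1 r1 + b * GDE E p pw q2 r2 := by
      rw [hre]
      exact gde_combo E p hp pw hpw0 q1 q2 hq1 hq2 a b ha0 hb0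
    calc Obj E p pw (a • q1 + b • q2)
        = GDE E p pw (a • q1 + b • q2) (rstar E p pw (a • q1 + b • q2)) :=
          obj_eq_gde_rstar E p hp pw hpw0 hpw1 _ hqc
      _ ≤ GDE E p pw (a • q1 + b • q2) (fun w u => a * r1 w u + b * r2 w u) := hGibbs
      _ ≤ a * GDE E p pw q1 r1 + b * GDE E p pw q2 r2 := hJC
      _ = a * Obj E p pw q1 + b * Obj E p pw q2 := by
          rw [← obj_eq_gde_rstar E p hp pw hpw0 hpw1 q1 hq1,
            ← obj_eq_gde_rstar E p hp pw hpw0 hpw1 q2 hq2]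
  · intro q1 hq1 q2 hq2 a b ha hb hab
    refine ⟨condDistOn_combo hq1.1 hq2.1 ha hb hab, ?_⟩
    rw [lossE_combo]
    have l1 := mul_le_mul_of_nonneg_left hq1.2 ha
    have l2 := mul_le_mul_of_nonneg_left hq2.2 hb
    have hL : a * L + b * L = L := by rw [← add_mul, hab, one_mul]
    linarith
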